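/- arXiv:1910.10990 — 3 statements merged into one kernel-verified Lean document; each statement's English description precedes it below -/
import Mathlib

section
/- For every natural number n ≥ 1 and every real x, T_n(x) + Σ_{k=1}^{n} ((−2)^k n / k!) · ( Σ_{i=0}^{⌊(n−k)/2⌋} (n−i−1)^{\underline{k−1}} · C(k+i−1, k−1) · T_{n−k−2i}(x) · x^k − (1+(−1)^{n−k})·(1/4)·((n+k)/2 − 1)^{\underline{k−1}} · C((n+k)/2 − 1, k−1) · x^k ) = cos(πn/2). -/
open Polynomial Polynomial.Chebyshev

/-- The falling factorial a(a-1)⋯(a-m+1). -/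
noncomputable def fallFac (a : ℝ) (m : ℕ) : ℝ := ∏ j ∈ Finset.range m, (a - j)

open Finset

theorem two_X_mul_T (j : ℤ) : 2 * X * T ℝ j = T ℝ (j + 1) + T ℝ (j - 1) := by
  have := T_add_two ℝ (j - 1)
  rw [show j - 1 + 2 = j + 1 by ring, show j - 1 + 1 = j by ring] at this
  linear_combination -this

theorem U_sum : ∀ m : ℕ, U ℝ (m : ℤ) = ∑ i ∈ range (m + 1), T ℝ ((m : ℤ) - 2 * i) := by
  intro m
  induction m using Nat.strong_induction_on with
  | _ m ih =>
    match m with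
    | 0 => simp
    | 1 =>
      rw [Finset.sum_range_succ, Finset.sum_range_succ]
      norm_num [U_one, T_one, T_neg_one]
      ring
    | (m + 2) =>
      have h2 := U_add_two ℝ (m : ℤ)
      have ih1 := ih (m + 1) (by omega)
      have ih0 := ih m (by omega)
      push_cast
      push_cast at h2 ih1 ih0
      rw [h2, ih1, ih0, Finset.mul_sum]
      have e1 : ∀ i ∈ range (m + 2), 2 * X * T ℝ ((m : ℤ) + 1 - 2 * i)
          = T ℝ ((m : ℤ) + 2 - 2 * i) + T ℝ ((m : ℤ) - 2 * i) := by
        intro i _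
        have := two_X_mul_T ((m : ℤ) + 1 - 2 * i)
        rw [show (m : ℤ) + 1 - 2*i + 1 = (m:ℤ) + 2 - 2*i by ring,
          show (m : ℤ) + 1 - 2*i - 1 = (m:ℤ) - 2*i by ring] at this
        exact this
      rw [Finset.sum_congr rfl e1, Finset.sum_add_distrib]
      have e2 : ∑ i ∈ range (m + 2 + 1), T ℝ ((m : ℤ) + 2 - 2 * i)
          = (∑ i ∈ range (m + 2), T ℝ ((m : ℤ) + 2 - 2 * i)) + T ℝ (-(m:ℤ) - 2) := by
        rw [Finset.sum_range_succ,
          show (m:ℤ) + 2 - 2 * ((m + 2 : ℕ) : ℤ) = -(m:ℤ) - 2 by push_cast; ring]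
      have e3 : ∑ i ∈ range (m + 2), T ℝ ((m : ℤ) - 2 * i)
          = (∑ i ∈ range (m + 1), T ℝ ((m : ℤ) - 2 * i)) + T ℝ (-(m:ℤ) - 2) := by
        rw [Finset.sum_range_succ,
          show (m:ℤ) - 2 * ((m + 1 : ℕ) : ℤ) = -(m:ℤ) - 2 by push_cast; ring]
      rw [e2, e3]
      ring


theorem fallFac_succ (a : ℝ) (m : ℕ) : fallFac a (m + 1) = fallFac a m * (a - m) :=
  Finset.prod_range_succ _ _

theorem fallFac_succ' (a : ℝ) (m : ℕ) : fallFac a (m + 1) = fallFac (a - 1) m * a := by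
  unfold fallFac
  rw [Finset.prod_range_succ']
  simp only [Nat.cast_zero, sub_zero]
  congr 1
  exact Finset.prod_congr rfl fun j _ => by push_cast; ring

theorem fallFac_nat (m j : ℕ) : fallFac (m : ℝ) j = (Nat.descFactorial m j : ℝ) := by
  induction j with
  | zero => simp [fallFac]
  | succ j ih =>
    rw [fallFac_succ, ih, Nat.descFactorial_succ]
    by_cases h : j ≤ m
    · push_cast [h]; ring
    · rw [Nat.descFactorial_eq_zero_iff_lt.2 (by omega : m < j)]
      simp

noncomputable def aa (n k i : ℕ) : ℝ :=
  fallFac ((n : ℝ) - i - 1) (k - 1) * (Nat.choose (k + i - 1) (k - 1) : ℝ)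

theorem aa_eq (n k i : ℕ) (hk : 1 ≤ k) (hi : i ≤ n - k) (hkn : k ≤ n) :
    aa n k i = (Nat.factorial (k-1) : ℝ) * (Nat.choose (n - i - 1) (k-1) : ℝ)
      * (Nat.choose (k + i - 1) (k - 1) : ℝ) := by
  unfold aa
  have h1 : ((n : ℝ) - i - 1) = ((n - i - 1 : ℕ) : ℝ) := by
    rw [Nat.cast_sub (by omega : 1 ≤ n - i), Nat.cast_sub (by omega : i ≤ n), Nat.cast_one]
  rw [h1, fallFac_nat, Nat.descFactorial_eq_factorial_mul_choose]
  push_cast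
  ring

theorem aa_symm (n k i : ℕ) (hk : 1 ≤ k) (hkn : k ≤ n) (hi : i ≤ n - k) :
    aa n k (n - k - i) = aa n k i := by
  rw [aa_eq n k i hk hi hkn, aa_eq n k (n - k - i) hk (by omega) hkn]
  rw [show n - (n - k - i) - 1 = k + i - 1 by omega, show k + (n - k - i) - 1 = n - i - 1 by omega]
  ring

theorem key_sum (r : ℝ) (K s : ℕ) :
    ∑ i ∈ range (s + 1),
        fallFac (r - i - 1) K * (Nat.choose (K + i) K : ℝ) * (r - (K + 1) - 2 * i)
      = fallFac (r - s - 1) (K + 1) * (Nat.choose (K + 1 + s) (K + 1) : ℝ) := by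
  induction s with
  | zero =>
    rw [Finset.sum_range_one]
    simp only [Nat.cast_zero, sub_zero, mul_zero, Nat.add_zero, Nat.choose_self, Nat.cast_one,
      mul_one]
    rw [fallFac_succ]
    push_cast
    ring
  | succ s ih =>
    rw [Finset.sum_range_succ, ih]
    have h1 : fallFac (r - s - 1) (K + 1) = fallFac (r - (s+1:ℕ) - 1) K * (r - s - 1) := by
      rw [fallFac_succ']
      congr 2
      push_cast; ring
    have h2 : fallFac (r - (s+1:ℕ) - 1) (K + 1)
        = fallFac (r - (s+1:ℕ) - 1) K * (r - (s+1:ℕ) - 1 - K) := by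
      rw [fallFac_succ]
    have hp : (Nat.choose (K + 1 + (s+1)) (K + 1) : ℝ)
        = (Nat.choose (K + s + 1) K : ℝ) + (Nat.choose (K + s + 1) (K + 1) : ℝ) := by
      rw [show K + 1 + (s + 1) = (K + s + 1) + 1 by omega, Nat.choose_succ_succ']
      push_cast; ring
    have hc : (Nat.choose (K + s + 1) (K + 1) : ℝ) * (K + 1)
        = (Nat.choose (K + s + 1) K : ℝ) * (s + 1) := by
      have h := Nat.choose_succ_right_eq (K + s + 1) K
      have h' : (Nat.choose (K + s + 1) (K+1)) * (K + 1) = (Nat.choose (K + s + 1) K) * (s + 1) := by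
        rw [h]; congr 1; omega
      exact_mod_cast h'
    rw [show K + 1 + s = K + s + 1 by omega, show K + (s+1) = K + s + 1 by omega, h1, h2, hp]
    push_cast
    linear_combination fallFac (r - ((s:ℝ)+1) - 1) K * hc

theorem dN_zero (N : ℕ) (c : ℕ → ℝ) (hc : ∀ i ≤ N, c (N - i) = c i) :
    ∑ i ∈ range (N + 1), c i * ((N : ℝ) - 2 * i) = 0 := by
  have h := Finset.sum_range_reflect (fun i => c i * ((N : ℝ) - 2 * i)) (N + 1)
  simp only [Nat.add_sub_cancel] at h
  have h2 : ∑ j ∈ range (N + 1), c (N - j) * ((N : ℝ) - 2 * ((N - j : ℕ) : ℝ))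
      = ∑ j ∈ range (N + 1), -(c j * ((N : ℝ) - 2 * j)) := by
    refine Finset.sum_congr rfl fun j hj => ?_
    have hjN : j ≤ N := by simpa [Nat.lt_succ_iff] using hj
    rw [hc j hjN, Nat.cast_sub hjN]
    ring
  rw [h2, Finset.sum_neg_distrib] at h
  linarith

theorem abel_poly (f g : ℕ → ℝ[X]) (N : ℕ) :
    ∑ i ∈ range (N + 1), f i * g i
      = (∑ i ∈ range (N + 1), f i) * g N
        + ∑ s ∈ range N, (∑ i ∈ range (s + 1), f i) * (g s - g (s + 1)) := by
  induction N with
  | zero => simp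
  | succ N ih =>
    rw [Finset.sum_range_succ (fun i => f i * g i) (N + 1), ih,
      Finset.sum_range_succ (fun s => (∑ i ∈ range (s + 1), f i) * (g s - g (s + 1))) N,
      Finset.sum_range_succ f (N + 1)]
    ring

theorem U_sub_U' (m : ℤ) : U ℝ m - U ℝ (m - 2) = 2 * T ℝ m := by
  have h := U_eq_X_mul_U_add_T ℝ (m - 1)
  rw [sub_add_cancel] at h
  linear_combination 2 * h - U_eq ℝ m

theorem natDegree_T_le : ∀ n : ℕ, (T ℝ (n : ℤ)).natDegree ≤ n := by
  intro n
  induction n using Nat.strong_induction_on with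
  | _ n ih =>
    match n with
    | 0 => simp
    | 1 => simpa using natDegree_X_le
    | (n + 2) =>
      have h2 := T_add_two ℝ (n : ℤ)
      have e : ((n:ℤ) + 2) = ((n + 2 : ℕ) : ℤ) := by push_cast; ring
      rw [e] at h2
      rw [h2]
      refine le_trans (natDegree_sub_le _ _) ?_
      have h3 : (2 * X * T ℝ ((n:ℤ) + 1)).natDegree ≤ n + 2 := by
        refine le_trans (natDegree_mul_le) ?_
        have hx : (2 * X : ℝ[X]).natDegree ≤ 1 := le_trans natDegree_mul_le (by simp)
        have ht : (T ℝ ((n:ℤ) + 1)).natDegree ≤ n + 1 := by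
          have := ih (n + 1) (by omega)
          rwa [show (((n+1:ℕ)):ℤ) = (n:ℤ) + 1 by push_cast; ring] at this
        omega
      have h4 := ih n (by omega)
      simp only [max_le_iff]
      exact ⟨h3, by omega⟩

theorem taylor_expand (p : ℝ[X]) (x : ℝ) (M : ℕ) (h : p.natDegree < M + 1) :
    p.eval 0 = ∑ k ∈ range (M + 1), (derivative^[k] p).eval x * (-x)^k / (Nat.factorial k) := by
  have h0 : (taylor x p).eval (-x) = p.eval 0 := by
    rw [taylor_apply, eval_comp]
    simp
  have h1 : (taylor x p).natDegree < M + 1 := by rwa [natDegree_taylor]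
  rw [← h0, eval_eq_sum_range' h1]
  refine Finset.sum_congr rfl fun k _ => ?_
  rw [taylor_coeff]
  have h2 : ((Nat.factorial k : ℝ)) * (hasseDeriv k p).eval x = (derivative^[k] p).eval x := by
    have h3 := Polynomial.factorial_smul_hasseDeriv (R := ℝ) k
    have h4 : (Nat.factorial k) • (hasseDeriv k p) = derivative^[k] p := by
      have := congrFun h3 p
      simpa using this
    rw [← h4, nsmul_eq_mul, eval_mul, eval_natCast]
  rw [← h2]
  have hfac : (Nat.factorial k : ℝ) ≠ 0 := Nat.cast_ne_zero.2 (Nat.factorial_ne_zero k)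
  field_simp

theorem half_sum (N : ℕ) (f : ℕ → ℝ) (hf : ∀ i ≤ N, f (N - i) = f i) :
    ∑ i ∈ range (N + 1), f i
      = 2 * (∑ i ∈ range (N / 2 + 1), f i) - (if Even N then f (N / 2) else 0) := by
  have hsplit : ∑ i ∈ Finset.Ico 0 (N/2+1), f i + ∑ i ∈ Finset.Ico (N/2+1) (N+1), f i
      = ∑ i ∈ Finset.Ico 0 (N+1), f i :=
    Finset.sum_Ico_consecutive _ (by omega) (by omega)
  rw [← Finset.range_eq_Ico, ← Finset.range_eq_Ico] at hsplit
  have h2 : ∑ i ∈ Finset.Ico (N/2+1) (N+1), f i = ∑ t ∈ range (N - N/2), f (N/2 + 1 + t) := by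
    rw [Finset.sum_Ico_eq_sum_range, show N + 1 - (N/2+1) = N - N/2 from by omega]
  have h3 : ∑ t ∈ range (N - N/2), f (N/2 + 1 + t) = ∑ t ∈ range (N - N/2), f t := by
    rw [← Finset.sum_range_reflect (fun t => f (N/2 + 1 + t)) (N - N/2)]
    refine Finset.sum_congr rfl fun t ht => ?_
    have ht' : t < N - N/2 := Finset.mem_range.mp ht
    rw [show N/2 + 1 + (N - N/2 - 1 - t) = N - t from by omega]
    exact hf t (by omega)
  rcases Nat.even_or_odd N with he | ho
  · have hM : N - N/2 = N/2 := by obtain ⟨r, rfl⟩ := he; omega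
    rw [hM] at h2 h3
    have h4 : ∑ t ∈ range (N/2), f t = ∑ t ∈ range (N/2 + 1), f t - f (N/2) := by
      rw [Finset.sum_range_succ]; ring
    rw [if_pos he]
    linarith
  · have hM : N - N/2 = N/2 + 1 := by obtain ⟨r, rfl⟩ := ho; omega
    rw [hM] at h2 h3
    rw [if_neg (by simpa [Nat.not_even_iff_odd] using ho)]
    linarith

theorem deriv_T (n : ℕ) : ∀ k : ℕ, 1 ≤ k → k ≤ n →
    derivative^[k] (T ℝ (n : ℤ))
      = C ((2:ℝ)^(k-1) * n) * ∑ i ∈ range (n - k + 1), C (aa n k i) * T ℝ ((n:ℤ) - k - 2*i) := by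
  intro k hk
  induction k, hk using Nat.le_induction with
  | base =>
    intro hn1
    rw [Function.iterate_one, T_derivative_eq_U]
    have hU := U_sum (n - 1)
    have hc : ((n - 1 : ℕ) : ℤ) = (n : ℤ) - 1 := by omega
    rw [hc] at hU
    rw [hU, Finset.mul_sum]
    rw [show n - 1 + 1 = n by omega] at *
    rw [show (2:ℝ)^(1-1) * (n:ℝ) = (n:ℝ) by norm_num]
    rw [← map_intCast (C : ℝ →+* ℝ[X]) (n : ℤ), Finset.mul_sum]
    refine Finset.sum_congr rfl fun i hi => ?_
    have h1 : (1 + i - 1) = i := by omega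
    have haa : aa n 1 i = 1 := by simp [aa, h1, fallFac]
    rw [haa, map_one, one_mul]
    rw [show ((n:ℤ):ℝ) = (n:ℝ) by simp]
    norm_num
  | succ k hk ih =>
    intro hk1n
    have hkn : k ≤ n := by omega
    set N := n - k with hNdef
    have hNc : ((N : ℕ) : ℤ) = (n:ℤ) - k := by omega
    have hNr : ((N : ℕ) : ℝ) = (n:ℝ) - k := by
      rw [hNdef]; push_cast [hkn]; ring
    rw [Function.iterate_succ_apply', ih hkn, derivative_C_mul, derivative_sum]
    have e1 : ∀ i ∈ range (N + 1),
        derivative (C (aa n k i) * T ℝ ((n:ℤ) - k - 2*i))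
          = C (aa n k i * ((N : ℝ) - 2*i)) * U ℝ ((N : ℤ) - 2*i - 1) := by
      intro i hi
      rw [derivative_C_mul, T_derivative_eq_U]
      rw [show (n:ℤ) - k - 2*i - 1 = (N:ℤ) - 2*i - 1 by omega]
      rw [show ((n:ℤ) - k - 2*(i:ℤ)) = ((N:ℤ) - 2*i) by omega]
      rw [← map_intCast (C : ℝ →+* ℝ[X]) ((N:ℤ) - 2*i), Polynomial.C_mul, ← mul_assoc]
      push_cast
      ring
    rw [Finset.sum_congr rfl e1]
    rw [abel_poly (fun i => C (aa n k i * ((N : ℝ) - 2*i))) (fun i => U ℝ ((N : ℤ) - 2*i - 1)) N]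
    have hzero : ∑ i ∈ range (N+1), C (aa n k i * ((N : ℝ) - 2*i)) = 0 := by
      rw [← map_sum, dN_zero N (aa n k) (fun i hi => aa_symm n k i hk hkn hi), map_zero]
    rw [hzero, zero_mul, zero_add]
    have e2 : ∀ s ∈ range N,
        (∑ i ∈ range (s+1), C (aa n k i * ((N : ℝ) - 2*i)))
            * (U ℝ ((N : ℤ) - 2*s - 1) - U ℝ ((N : ℤ) - 2*(s+1 : ℕ) - 1))
          = C (aa n (k+1) s) * (2 * T ℝ ((N:ℤ) - 2*s - 1)) := by
      intro s hs
      have hU2 := U_sub_U' ((N:ℤ) - 2*s - 1)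
      rw [show (N:ℤ) - 2*s - 1 - 2 = (N:ℤ) - 2*((s+1:ℕ):ℤ) - 1 by push_cast; ring] at hU2
      rw [hU2]
      congr 1
      rw [← map_sum]
      congr 1
      -- the combinatorial identity
      have hks := key_sum (n : ℝ) (k-1) s
      rw [show k - 1 + 1 = k by omega] at hks
      have lhs_eq : ∀ i ∈ range (s+1), aa n k i * ((N : ℝ) - 2*i)
          = fallFac ((n:ℝ) - i - 1) (k-1) * (Nat.choose ((k-1) + i) (k-1) : ℝ)
              * ((n:ℝ) - (((k-1 : ℕ):ℝ) + 1) - 2*i) := by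
        intro i _
        rw [show (k-1) + i = k + i - 1 by omega]
        unfold aa
        rw [hNr, show ((k - 1 : ℕ):ℝ) = (k:ℝ) - 1 by push_cast [hk]; ring]
        ring
      rw [Finset.sum_congr rfl lhs_eq, hks]
      unfold aa
      rw [Nat.add_sub_cancel, show k + 1 + s - 1 = k + s by omega]
    rw [Finset.sum_congr rfl e2]
    rw [show n - (k+1) + 1 = N by omega]
    have hC : C ((2:ℝ)^(k+1-1) * n) = C ((2:ℝ)^(k-1) * n) * 2 := by
      rw [show (2:ℝ[X]) = C 2 from (map_ofNat Polynomial.C 2).symm, ← Polynomial.C_mul]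
      congr 1
      rw [show k + 1 - 1 = (k-1) + 1 by omega, pow_succ]
      ring
    rw [hC, Finset.mul_sum, Finset.mul_sum]
    refine Finset.sum_congr rfl fun s hs => ?_
    rw [show (n:ℤ) - (k+1:ℕ) - 2*s = (N:ℤ) - 2*s - 1 by omega]
    ring

theorem chebyshev_T_identity (n : ℕ) (hn : 1 ≤ n) (x : ℝ) :
    (T ℝ n).eval x
      + ∑ k ∈ Finset.Icc 1 n, ((-2 : ℝ) ^ k * n / (Nat.factorial k)) *
        ((∑ i ∈ Finset.range ((n - k) / 2 + 1),
            fallFac ((n : ℝ) - i - 1) (k - 1) * (Nat.choose (k + i - 1) (k - 1) : ℝ)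
              * (T ℝ ((n - k - 2 * i : ℕ))).eval x * x ^ k)
          - (1 + (-1 : ℝ) ^ (n - k)) * (1 / 4)
              * fallFac (((n + k) / 2 - 1 : ℕ) : ℝ) (k - 1)
              * (Nat.choose ((n + k) / 2 - 1) (k - 1) : ℝ) * x ^ k)
    = Real.cos (Real.pi * n / 2) := by
  have hrhs : Real.cos (Real.pi * n / 2) = (T ℝ (n : ℤ)).eval 0 := by
    have h := Polynomial.Chebyshev.T_real_cos (Real.pi / 2) (n : ℤ)
    rw [Real.cos_pi_div_two] at h
    rw [h]
    congr 1
    push_cast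
    ring
  have hdeg : (T ℝ (n : ℤ)).natDegree < n + 1 := by
    have := natDegree_T_le n
    omega
  have htay := taylor_expand (T ℝ (n : ℤ)) x n hdeg
  have htay2 : (T ℝ (n : ℤ)).eval 0 = (T ℝ (n : ℤ)).eval x
      + ∑ k ∈ Finset.Icc 1 n,
          (derivative^[k] (T ℝ (n : ℤ))).eval x * (-x)^k / (Nat.factorial k) := by
    rw [htay, Finset.range_eq_Ico, Finset.sum_eq_sum_Ico_succ_bot (show 0 < n + 1 by omega)]
    rw [show Finset.Ico (0 + 1) (n + 1) = Finset.Icc 1 n by rw [Finset.Ico_add_one_right_eq_Icc]]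
    simp
  rw [hrhs, htay2]
  congr 1
  refine Finset.sum_congr rfl fun k hk => ?_
  obtain ⟨hk1, hkn⟩ := Finset.mem_Icc.mp hk
  -- evaluate the derivative
  have hev : eval x (derivative^[k] (T ℝ (n : ℤ)))
      = (2:ℝ)^(k-1) * n * ∑ i ∈ range (n - k + 1),
          aa n k i * eval x (T ℝ ((n:ℤ) - k - 2*i)) := by
    rw [deriv_T n k hk1 hkn]
    rw [eval_mul, eval_C, eval_finset_sum]
    congr 1
    refine Finset.sum_congr rfl fun i _ => ?_
    rw [eval_mul, eval_C]
  have hfs : ∀ i ≤ n - k, (fun i => aa n k i * eval x (T ℝ ((n:ℤ) - k - 2*i))) (n - k - i)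
      = (fun i => aa n k i * eval x (T ℝ ((n:ℤ) - k - 2*i))) i := by
    intro i hi
    simp only
    rw [aa_symm n k i hk1 hkn hi]
    rw [show (n:ℤ) - k - 2*((n - k - i : ℕ) : ℤ) = -((n:ℤ) - k - 2*i) by omega, T_neg]
  have hhalf := half_sum (n - k) (fun i => aa n k i * eval x (T ℝ ((n:ℤ) - k - 2*i))) hfs
  rw [hev, hhalf]
  -- statement inner sum rewrite
  have hterm : ∀ i ∈ range ((n - k)/2 + 1),
      fallFac ((n : ℝ) - i - 1) (k - 1) * (Nat.choose (k + i - 1) (k - 1) : ℝ)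
          * (T ℝ (((n - k - 2 * i : ℕ) : ℤ))).eval x * x ^ k
        = (aa n k i * eval x (T ℝ ((n:ℤ) - k - 2*i))) * x ^ k := by
    intro i hi
    have hi2 : 2 * i ≤ n - k := by
      have := Finset.mem_range.mp hi
      omega
    rw [show ((n - k - 2 * i : ℕ) : ℤ) = (n:ℤ) - k - 2*i by omega]
    unfold aa
    ring
  rw [Finset.sum_congr rfl hterm, ← Finset.sum_mul]
  -- now case on parity
  rw [show ((-2:ℝ))^k = (-1:ℝ)^k * 2^k by rw [← neg_one_mul, mul_pow],
    show (-x)^k = (-1:ℝ)^k * x^k by rw [← neg_one_mul, mul_pow],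
    show (2:ℝ)^k = 2^(k-1) * 2 by rw [← pow_succ]; congr 1; omega]
  rcases Nat.even_or_odd (n - k) with he | ho
  · rw [if_pos he, he.neg_one_pow]
    have hmid : aa n k ((n - k)/2) * eval x (T ℝ ((n:ℤ) - k - 2*(((n - k)/2 : ℕ) : ℤ)))
        = fallFac (((n + k) / 2 - 1 : ℕ) : ℝ) (k - 1)
            * (Nat.choose ((n + k) / 2 - 1) (k - 1) : ℝ) := by
      obtain ⟨r, hr⟩ := he
      rw [show (n:ℤ) - k - 2*(((n - k)/2 : ℕ) : ℤ) = 0 by omega, T_zero, eval_one, mul_one]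
      unfold aa
      rw [show (n + k)/2 - 1 = k + (n - k)/2 - 1 by omega]
      congr 2
      have hc : (n + k)/2 - 1 + 1 + (n - k)/2 = n := by omega
      have := congrArg (Nat.cast : ℕ → ℝ) hc
      push_cast at this
      rw [show (n + k)/2 - 1 = k + (n - k)/2 - 1 by omega] at this
      linarith
    rw [hmid]
    ring
  · rw [if_neg (by simpa [Nat.not_even_iff_odd] using ho), ho.neg_one_pow]
    ring
end

section
/- The polynomial 8x₁³ − 6x₁x₂x₀ − 3x₀²x₁ + x₃x₀² lies in the kernel of the derivation D_T of ℂ[x₀,x₁,x₂,x₃] defined by D_T(x₀)=0, D_T(x₁)=x₀, D_T(x₂)=4x₁, D_T(x₃)=6x₂+3x₀; consequently 8T_1(x)³ − 6T_1(x)T_2(x)T_0(x) − 3T_0(x)²T_1(x) + T_3(x)T_0(x)² = 0 identically. -/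
open Polynomial Polynomial.Chebyshev MvPolynomial

theorem cayley_element_T3
    (D : Derivation ℂ (MvPolynomial (Fin 4) ℂ) (MvPolynomial (Fin 4) ℂ))
    (h0 : D (X 0) = 0) (h1 : D (X 1) = X 0) (h2 : D (X 2) = 4 * X 1)
    (h3 : D (X 3) = 6 * X 2 + 3 * X 0) :
    D (8 * X 1 ^ 3 - 6 * X 1 * X 2 * X 0 - 3 * X 0 ^ 2 * X 1 + X 3 * X 0 ^ 2) = 0 ∧
    (8 * (T ℝ 1) ^ 3 - 6 * T ℝ 1 * T ℝ 2 * T ℝ 0 - 3 * (T ℝ 0) ^ 2 * T ℝ 1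
      + T ℝ 3 * (T ℝ 0) ^ 2 = 0) := by
  constructor
  · simp only [map_sub, map_add, Derivation.leibniz, Derivation.leibniz_pow, map_mul,
      Derivation.map_smul, h0, h1, h2, h3, smul_eq_mul]
    have h8 : D (8 : MvPolynomial (Fin 4) ℂ) = 0 := by
      rw [show (8 : MvPolynomial (Fin 4) ℂ) = algebraMap ℂ _ 8 from (map_ofNat (algebraMap ℂ _) 8).symm, Derivation.map_algebraMap]
    have h6 : D (6 : MvPolynomial (Fin 4) ℂ) = 0 := by
      rw [show (6 : MvPolynomial (Fin 4) ℂ) = algebraMap ℂ _ 6 from (map_ofNat (algebraMap ℂ _) 6).symm, Derivation.map_algebraMap]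
    have h3' : D (3 : MvPolynomial (Fin 4) ℂ) = 0 := by
      rw [show (3 : MvPolynomial (Fin 4) ℂ) = algebraMap ℂ _ 3 from (map_ofNat (algebraMap ℂ _) 3).symm, Derivation.map_algebraMap]
    rw [h8, h6, h3']
    ring
  · have t0 : T ℝ 0 = 1 := T_zero ℝ
    have t1 : T ℝ 1 = Polynomial.X := T_one ℝ
    have t2 : T ℝ 2 = 2 * Polynomial.X ^ 2 - 1 := T_two ℝ
    have t3 : T ℝ 3 = 4 * Polynomial.X ^ 3 - 3 * Polynomial.X := by
      have := T_add_two ℝ 1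
      simp [t1, t2] at this
      rw [this]; ring
    rw [t0, t1, t2, t3]; ring
end

section
/- For every natural number n ≥ 1 and real x, Σ_{k=0}^{n} ( Σ_{i=0}^{⌊(n−k)/2⌋} (−1)^{n−k−2i} · ((k+1)/(i+k+1)) · C(n−i, k+i) · C(n−k−i−1, i) · (2x)^{n−k−2i} ) · U_k(x) = cos(πn/2). -/
open Polynomial Polynomial.Chebyshev

/-- Generalized binomial coefficient with real upper argument. -/
noncomputable def gbinom (a : ℝ) (m : ℕ) : ℝ := fallFac a m / Nat.factorial m

lemma gbinom_zero (a : ℝ) : gbinom a 0 = 1 := by simp [gbinom, fallFac]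

lemma gbinom_nat (a m : ℕ) : gbinom (a : ℝ) m = (a.choose m : ℝ) := by
  rcases lt_or_ge a m with h | h
  · have : ((a:ℝ) - (a:ℕ)) = 0 := by ring
    rw [gbinom, fallFac, Finset.prod_eq_zero (Finset.mem_range.2 h) this,
      Nat.choose_eq_zero_of_lt h]
    simp
  · have hcast : ∏ j ∈ Finset.range m, ((a:ℝ) - j) = ((a.descFactorial m : ℕ) : ℝ) := by
      rw [Nat.descFactorial_eq_prod_range, Nat.cast_prod]
      apply Finset.prod_congr rfl
      intro j hj
      have : j ≤ a := le_trans (Nat.le_of_lt_succ (Nat.lt_succ_of_lt (Finset.mem_range.1 hj))) h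
      push_cast [Nat.cast_sub this]
      ring
    rw [gbinom, fallFac, hcast, Nat.descFactorial_eq_factorial_mul_choose]
    push_cast
    field_simp

noncomputable def f (x : ℝ) (n k i : ℕ) : ℝ :=
  (-1 : ℝ) ^ (n - k - 2 * i) * (((k : ℝ) + 1) / ((i : ℝ) + k + 1))
    * (Nat.choose (n - i) (k + i) : ℝ)
    * gbinom ((n : ℝ) - k - i - 1) i * (2 * x) ^ (n - k - 2 * i)

lemma f_eq_zero (x : ℝ) {n k i : ℕ} (h : n < k + 2 * i) : f x n k i = 0 := by
  have h2 : n - i < k + i := by omega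
  simp [f, Nat.choose_eq_zero_of_lt h2]

noncomputable def c (x : ℝ) (n k : ℕ) : ℝ := ∑ i ∈ Finset.range (n + 1), f x n k i

lemma inner_eq (x : ℝ) (n k : ℕ) :
    ∑ i ∈ Finset.range ((n - k) / 2 + 1), f x n k i = c x n k := by
  apply Finset.sum_subset
  · apply Finset.range_subset_range.2; omega
  · intro i hi hni
    rw [Finset.mem_range] at hi hni
    exact f_eq_zero x (by omega)

lemma c_ext (x : ℝ) (n k N : ℕ) (h : n + 1 ≤ N) :
    c x n k = ∑ i ∈ Finset.range N, f x n k i := by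
  apply Finset.sum_subset
  · apply Finset.range_subset_range.2; omega
  · intro i hi hni
    rw [Finset.mem_range] at hi hni
    exact f_eq_zero x (by omega)

lemma c_eq_zero (x : ℝ) {n k : ℕ} (h : n < k) : c x n k = 0 := by
  apply Finset.sum_eq_zero
  intro i _
  exact f_eq_zero x (by omega)

lemma f_top (x : ℝ) (k : ℕ) : f x k k 0 = 1 := by
  have h1 : k - k - 2 * 0 = 0 := by omega
  have h2 : k - 0 = k := by omega
  rw [f, h1, h2]
  simp only [Nat.add_zero, Nat.cast_zero, zero_add, gbinom_zero, Nat.choose_self]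
  rw [div_self (by positivity)]
  norm_num

lemma T0 (x : ℝ) (n k : ℕ) (hn : 1 ≤ n) :
    f x n k 0 = (if k = 0 then 0 else f x (n - 1) (k - 1) 0) - 2 * x * f x (n - 1) k 0 := by
  rcases lt_trichotomy n k with h | h | h
  · rw [f_eq_zero x (by omega : n < k + 2 * 0), f_eq_zero x (by omega : n - 1 < k + 2 * 0)]
    rw [if_neg (by omega), f_eq_zero x (by omega : n - 1 < (k - 1) + 2 * 0)]
    ring
  · subst h
    rw [if_neg (by omega), f_eq_zero x (by omega : n - 1 < n + 2 * 0)]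
    have : n - 1 = (n - 1) := rfl
    have h1 : f x (n - 1) (n - 1) 0 = 1 := f_top x (n - 1)
    rw [f_top]
    -- goal : 1 = f x (n-1) (n-1) 0 - 2*x*0
    rw [h1]; ring
  · -- k < n
    obtain ⟨d, rfl⟩ : ∃ d, n = k + d + 1 := ⟨n - k - 1, by omega⟩
    have e1 : k + d + 1 - k - 2 * 0 = d + 1 := by omega
    have e2 : k + d + 1 - 0 = k + d + 1 := by omega
    have e3 : k + d + 1 - 1 = k + d := by omega
    have e4 : k + d - k - 2 * 0 = d := by omega
    have e5 : k + d - 0 = k + d := by omega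
    rcases Nat.eq_zero_or_pos k with rfl | hk
    · rw [if_pos rfl]
      simp only [f, e1, e2, e3, e4, e5, gbinom_zero, Nat.add_zero, Nat.cast_zero, zero_add, Nat.sub_zero]
      rw [Nat.choose_zero_right, Nat.choose_zero_right]
      push_cast
      rw [pow_succ, pow_succ]
      simp only [Nat.sub_zero]
      ring
    · obtain ⟨k', rfl⟩ : ∃ k', k = k' + 1 := ⟨k - 1, by omega⟩
      rw [if_neg (by omega)]
      have e6 : k' + 1 - 1 = k' := by omega
      have e7 : k' + 1 + d - k' - 2 * 0 = d + 1 := by omega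
      simp only [f, e1, e2, e3, e4, e5, e6, e7, gbinom_zero, Nat.add_zero, Nat.cast_zero, zero_add, Nat.sub_zero]
      rw [show k' + 1 + d + 1 = (k' + d + 1) + 1 from by omega,
        show k' + 1 + 0 = k' + 1 from by omega,
        Nat.choose_succ_succ (k' + d + 1) k',
        show k' + d + 1 = k' + 1 + d from by omega]
      push_cast
      rw [pow_succ, pow_succ]
      field_simp
      ring

lemma key_alg (k i dd P Q R S : ℝ)
    (h1 : (0:ℝ) < i + k + 1)
    (hPQ : P * (k + i + 1) = Q * (dd + 1)) (hRS : R * (i + 1) = S * dd) :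
    ((k + 1) / (i + k + 2)) * (Q + P) * (R + S) + ((k + 1) / (i + k + 1)) * Q * S
      = (k / (i + k + 1)) * Q * (R + S) + ((k + 1) / (i + k + 2)) * P * R
        + ((k + 2) / (i + k + 2)) * (Q + P) * S := by
  have h2 : (0:ℝ) < i + k + 2 := by linarith
  field_simp
  linear_combination (-(S * 1)) * hPQ + (Q * 1) * hRS

lemma f_val' (x : ℝ) (k i d : ℕ) (h : 1 ≤ i + d) :
    f x (k + 2 * i + d) k i
      = (-1 : ℝ) ^ d * (((k : ℝ) + 1) / ((i : ℝ) + k + 1))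
          * (((k + i + d).choose (k + i) : ℕ) : ℝ) * (((i + d - 1).choose i : ℕ) : ℝ)
          * (2 * x) ^ d := by
  have e1 : k + 2 * i + d - k - 2 * i = d := by omega
  have e2 : k + 2 * i + d - i = k + i + d := by omega
  have e3 : ((k + 2 * i + d : ℕ) : ℝ) - k - i - 1 = ((i + d - 1 : ℕ) : ℝ) := by
    push_cast [Nat.cast_sub h]
    ring
  rw [f, e1, e2, e3, gbinom_nat]

lemma T1 (x : ℝ) (n k i : ℕ) (hn : 2 ≤ n) :
    f x n k (i + 1) + f x (n - 2) k i
      = (if k = 0 then 0 else f x (n - 1) (k - 1) (i + 1)) - 2 * x * f x (n - 1) k (i + 1)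
        + f x (n - 1) (k + 1) i := by
  rcases lt_trichotomy n (k + 2 * i + 2) with h | h | h
  · -- all terms zero
    rw [f_eq_zero x (by omega : n < k + 2 * (i + 1)),
      f_eq_zero x (by omega : n - 2 < k + 2 * i),
      f_eq_zero x (by omega : n - 1 < k + 2 * (i + 1)),
      f_eq_zero x (by omega : n - 1 < (k + 1) + 2 * i)]
    rcases Nat.eq_zero_or_pos k with rfl | hk
    · rw [if_pos rfl]; ring
    · rw [if_neg (by omega), f_eq_zero x (by omega : n - 1 < (k - 1) + 2 * (i + 1))]; ring
  · -- boundary n = k + 2i + 2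
    subst h
    have hA : f x (k + 2 * i + 2) k (i + 1) = 0 := by
      rw [show k + 2 * i + 2 = k + 2 * (i + 1) + 0 from by omega,
        f_val' x k (i + 1) 0 (by omega)]
      rw [show i + 1 + 0 - 1 = i from by omega, Nat.choose_succ_self]
      norm_num
    have hB : f x (k + 2 * i + 2 - 1) k (i + 1) = 0 :=
      f_eq_zero x (by omega)
    rcases Nat.eq_zero_or_pos i with rfl | hi
    · -- i = 0 : LHS = 0 + 1, RHS = if-term 0 - 0 + 1
      have hC : f x (k + 2 * 0 + 2 - 2) k 0 = 1 := by
        rw [show k + 2 * 0 + 2 - 2 = k from by omega]; exact f_top x k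
      have hE : f x (k + 2 * 0 + 2 - 1) (k + 1) 0 = 1 := by
        rw [show k + 2 * 0 + 2 - 1 = k + 1 from by omega]; exact f_top x (k + 1)
      rw [hA, hB, hC, hE]
      rcases Nat.eq_zero_or_pos k with rfl | hk
      · rw [if_pos rfl]; ring
      · obtain ⟨k', rfl⟩ : ∃ k', k = k' + 1 := ⟨k - 1, by omega⟩
        rw [if_neg (by omega)]
        have : f x (k' + 1 + 2 * 0 + 2 - 1) (k' + 1 - 1) (0 + 1) = 0 := by
          rw [show k' + 1 + 2 * 0 + 2 - 1 = k' + 2 * (0 + 1) + 0 from by omega,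
            show k' + 1 - 1 = k' from by omega,
            f_val' x k' (0 + 1) 0 (by omega)]
          rw [show 0 + 1 + 0 - 1 = 0 from by omega]
          norm_num
        rw [this]; ring
    · -- i ≥ 1 : everything zero
      obtain ⟨j, rfl⟩ : ∃ j, i = j + 1 := ⟨i - 1, by omega⟩
      have hC : f x (k + 2 * (j + 1) + 2 - 2) k (j + 1) = 0 := by
        rw [show k + 2 * (j + 1) + 2 - 2 = k + 2 * (j + 1) + 0 from by omega,
          f_val' x k (j + 1) 0 (by omega),
          show j + 1 + 0 - 1 = j from by omega, Nat.choose_succ_self]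
        norm_num
      have hE : f x (k + 2 * (j + 1) + 2 - 1) (k + 1) (j + 1) = 0 := by
        rw [show k + 2 * (j + 1) + 2 - 1 = (k + 1) + 2 * (j + 1) + 0 from by omega,
          f_val' x (k + 1) (j + 1) 0 (by omega),
          show j + 1 + 0 - 1 = j from by omega, Nat.choose_succ_self]
        norm_num
      rw [hA, hB, hC, hE]
      rcases Nat.eq_zero_or_pos k with rfl | hk
      · rw [if_pos rfl]; ring
      · obtain ⟨k', rfl⟩ : ∃ k', k = k' + 1 := ⟨k - 1, by omega⟩
        rw [if_neg (by omega)]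
        have : f x (k' + 1 + 2 * (j + 1) + 2 - 1) (k' + 1 - 1) (j + 1 + 1) = 0 := by
          rw [show k' + 1 + 2 * (j + 1) + 2 - 1 = k' + 2 * (j + 1 + 1) + 0 from by omega,
            show k' + 1 - 1 = k' from by omega,
            f_val' x k' (j + 1 + 1) 0 (by omega),
            show j + 1 + 1 + 0 - 1 = j + 1 from by omega, Nat.choose_succ_self]
          norm_num
        rw [this]; ring
  · -- main case n ≥ k + 2i + 3
    obtain ⟨d, rfl⟩ : ∃ d, n = k + 2 * i + 3 + d := ⟨n - (k + 2 * i + 3), by omega⟩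
    have h1 : f x (k + 2 * i + 3 + d) k (i + 1) = (-1:ℝ)^(d+1)
        * (((k : ℝ) + 1) / ((i:ℝ) + 1 + k + 1))
        * ((k + i + d + 2).choose (k + i + 1) : ℝ) * ((i + d + 1).choose (i + 1) : ℝ)
        * (2*x)^(d+1) := by
      rw [show k + 2 * i + 3 + d = k + 2 * (i + 1) + (d + 1) from by omega,
        f_val' x k (i + 1) (d + 1) (by omega),
        show k + (i + 1) + (d + 1) = k + i + d + 2 from by omega,
        show i + 1 + (d + 1) - 1 = i + d + 1 from by omega,
        show k + (i + 1) = k + i + 1 from by omega]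
      push_cast
      ring
    have h2 : f x (k + 2 * i + 3 + d - 2) k i = (-1:ℝ)^(d+1)
        * (((k : ℝ) + 1) / ((i:ℝ) + k + 1))
        * ((k + i + d + 1).choose (k + i) : ℝ) * ((i + d).choose i : ℝ)
        * (2*x)^(d+1) := by
      rw [show k + 2 * i + 3 + d - 2 = k + 2 * i + (d + 1) from by omega,
        f_val' x k i (d + 1) (by omega),
        show k + i + (d + 1) = k + i + d + 1 from by omega,
        show i + (d + 1) - 1 = i + d from by omega]
    have h4 : f x (k + 2 * i + 3 + d - 1) k (i + 1) = (-1:ℝ)^d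
        * (((k : ℝ) + 1) / ((i:ℝ) + 1 + k + 1))
        * ((k + i + d + 1).choose (k + i + 1) : ℝ) * ((i + d).choose (i + 1) : ℝ)
        * (2*x)^d := by
      rw [show k + 2 * i + 3 + d - 1 = k + 2 * (i + 1) + d from by omega,
        f_val' x k (i + 1) d (by omega),
        show k + (i + 1) + d = k + i + d + 1 from by omega,
        show i + 1 + d - 1 = i + d from by omega,
        show k + (i + 1) = k + i + 1 from by omega]
      push_cast
      ring
    have h5 : f x (k + 2 * i + 3 + d - 1) (k + 1) i = (-1:ℝ)^(d+1)
        * (((k : ℝ) + 2) / ((i:ℝ) + k + 2))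
        * ((k + i + d + 2).choose (k + i + 1) : ℝ) * ((i + d).choose i : ℝ)
        * (2*x)^(d+1) := by
      rw [show k + 2 * i + 3 + d - 1 = (k + 1) + 2 * i + (d + 1) from by omega,
        f_val' x (k + 1) i (d + 1) (by omega),
        show k + 1 + i + (d + 1) = k + i + d + 2 from by omega,
        show i + (d + 1) - 1 = i + d from by omega,
        show k + 1 + i = k + i + 1 from by omega]
      push_cast
      ring
    -- cast Pascal identities
    have pascal1 : ((k + i + d + 2).choose (k + i + 1) : ℝ)
        = ((k + i + d + 1).choose (k + i) : ℝ) + ((k + i + d + 1).choose (k + i + 1) : ℝ) := by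
      rw [show k + i + d + 2 = (k + i + d + 1) + 1 from by omega,
        show k + i + 1 = (k + i) + 1 from by omega, Nat.choose_succ_succ]
      push_cast
      ring
    have pascal2 : ((i + d + 1).choose (i + 1) : ℝ)
        = ((i + d).choose i : ℝ) + ((i + d).choose (i + 1) : ℝ) := by
      rw [show i + d + 1 = (i + d) + 1 from by omega, Nat.choose_succ_succ]
      push_cast
      ring
    set P : ℝ := ((k + i + d + 1).choose (k + i + 1) : ℝ) with hP
    set Q : ℝ := ((k + i + d + 1).choose (k + i) : ℝ) with hQ
    set R : ℝ := ((i + d).choose (i + 1) : ℝ) with hR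
    set S : ℝ := ((i + d).choose i : ℝ) with hS
    have hPQ : P * ((k:ℝ) + i + 1) = Q * ((d:ℝ) + 1) := by
      have := Nat.choose_succ_right_eq (k + i + d + 1) (k + i)
      rw [show k + i + d + 1 - (k + i) = d + 1 from by omega] at this
      rw [hP, hQ]
      exact_mod_cast this
    have hRS : R * ((i:ℝ) + 1) = S * (d:ℝ) := by
      have := Nat.choose_succ_right_eq (i + d) i
      rw [show i + d - i = d from by omega] at this
      rw [hR, hS]
      exact_mod_cast this
    have key := key_alg (k:ℝ) (i:ℝ) (d:ℝ) P Q R S (by positivity) hPQ hRS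
    rcases Nat.eq_zero_or_pos k with rfl | hk
    · rw [if_pos rfl, h1, h2, h4, h5, pascal1, pascal2]
      rw [pow_succ (-1:ℝ) d, pow_succ (2*x) d]
      linear_combination ((-1:ℝ)^d * (2*x)^d * (2*x) * (-1)) * key
    · obtain ⟨k', rfl⟩ : ∃ k', k = k' + 1 := ⟨k - 1, by omega⟩
      rw [if_neg (by omega)]
      have h3 : f x (k' + 1 + 2 * i + 3 + d - 1) (k' + 1 - 1) (i + 1) = (-1:ℝ)^(d+1)
          * (((k' : ℝ) + 1) / ((i:ℝ) + 1 + k' + 1))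
          * ((k' + i + d + 2).choose (k' + i + 1) : ℝ) * ((i + d + 1).choose (i + 1) : ℝ)
          * (2*x)^(d+1) := by
        rw [show k' + 1 + 2 * i + 3 + d - 1 = k' + 2 * (i + 1) + (d + 1) from by omega,
          show k' + 1 - 1 = k' from by omega,
          f_val' x k' (i + 1) (d + 1) (by omega),
          show k' + (i + 1) + (d + 1) = k' + i + d + 2 from by omega,
          show i + 1 + (d + 1) - 1 = i + d + 1 from by omega,
          show k' + (i + 1) = k' + i + 1 from by omega]
        push_cast
        ring
      rw [h1, h2, h3, h4, h5]
      -- here the choose arguments in h3 use k' while P Q R S use k = k' + 1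
      rw [show k' + i + d + 2 = (k' + 1) + i + d + 1 from by omega,
        show k' + i + 1 = (k' + 1) + i from by omega] at h3 ⊢
      rw [pascal1, pascal2]
      rw [pow_succ (-1:ℝ) d, pow_succ (2*x) d]
      push_cast
      push_cast at key
      linear_combination ((-1:ℝ)^d * (2*x)^d * (2*x) * (-1)) * key

lemma recC (x : ℝ) (n k : ℕ) (hn : 2 ≤ n) :
    c x n k + c x (n - 2) k
      = (if k = 0 then 0 else c x (n - 1) (k - 1)) - 2 * x * c x (n - 1) k
        + c x (n - 1) (k + 1) := by
  rw [c, c_ext x (n - 2) k n (by omega), c_ext x (n - 1) k (n + 1) (by omega),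
    c_ext x (n - 1) (k + 1) (n + 1) (by omega)]
  rw [Finset.sum_range_succ' (f x n k) n,
    Finset.sum_range_succ' (f x (n - 1) k) n,
    Finset.sum_range_succ (f x (n - 1) (k + 1)) n,
    f_eq_zero x (by omega : n - 1 < (k + 1) + 2 * n), add_zero]
  have hif : (if k = 0 then (0:ℝ) else c x (n - 1) (k - 1))
      = (∑ i ∈ Finset.range n, (if k = 0 then (0:ℝ) else f x (n - 1) (k - 1) (i + 1)))
        + (if k = 0 then (0:ℝ) else f x (n - 1) (k - 1) 0) := by
    rcases Nat.eq_zero_or_pos k with rfl | hk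
    · simp
    · rw [if_neg (by omega), if_neg (by omega), c_ext x (n - 1) (k - 1) (n + 1) (by omega),
        Finset.sum_range_succ' (f x (n - 1) (k - 1)) n]
      apply congrArg₂ _ (Finset.sum_congr rfl fun i _ => ?_) rfl
      rw [if_neg (by omega)]
  rw [hif, mul_add, Finset.mul_sum]
  have hterm : ∀ i ∈ Finset.range n,
      f x n k (i + 1) + f x (n - 2) k i
        = ((if k = 0 then (0:ℝ) else f x (n - 1) (k - 1) (i + 1))
            - 2 * x * f x (n - 1) k (i + 1) + f x (n - 1) (k + 1) i) := fun i _ => T1 x n k i hn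
  have hsum := Finset.sum_congr rfl hterm
  rw [Finset.sum_add_distrib] at hsum
  have h0 := T0 x n k (by omega)
  simp only [Finset.sum_add_distrib, Finset.sum_sub_distrib] at hsum ⊢
  linear_combination hsum + h0

noncomputable def Sb (x : ℝ) (n : ℕ) : ℝ :=
  ∑ k ∈ Finset.range (n + 1), c x n k * (U ℝ (k : ℤ)).eval x

lemma Sb_ext (x : ℝ) (n N : ℕ) (h : n + 1 ≤ N) :
    Sb x n = ∑ k ∈ Finset.range N, c x n k * (U ℝ (k : ℤ)).eval x := by
  apply Finset.sum_subset
  · apply Finset.range_subset_range.2; omega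
  · intro k hk hnk
    rw [Finset.mem_range] at hk hnk
    rw [c_eq_zero x (by omega : n < k)]
    ring

lemma Sb_rec (x : ℝ) (n : ℕ) (hn : 2 ≤ n) : Sb x n = - Sb x (n - 2) := by
  rw [← neg_eq_iff_eq_neg, ← add_eq_zero_iff_neg_eq']
  rw [Sb_ext x (n - 2) (n + 1) (by omega), Sb]
  rw [← Finset.sum_add_distrib]
  have hstep : ∀ k ∈ Finset.range (n + 1),
      c x (n - 2) k * (U ℝ (k : ℤ)).eval x + c x n k * (U ℝ (k : ℤ)).eval x
        = ((if k = 0 then 0 else c x (n - 1) (k - 1)) - 2 * x * c x (n - 1) k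
            + c x (n - 1) (k + 1)) * (U ℝ (k : ℤ)).eval x := by
    intro k _
    rw [← add_mul, add_comm (c x (n - 2) k) (c x n k), recC x n k hn]
  rw [Finset.sum_congr rfl hstep]
  simp only [sub_mul, add_mul]
  rw [Finset.sum_add_distrib, Finset.sum_sub_distrib]
  have hA : ∑ k ∈ Finset.range (n + 1),
      (if k = 0 then (0:ℝ) else c x (n - 1) (k - 1)) * (U ℝ (k : ℤ)).eval x
      = ∑ k ∈ Finset.range (n + 1), c x (n - 1) k * (U ℝ ((k : ℤ) + 1)).eval x := by
    rw [Finset.sum_range_succ' (fun k => (if k = 0 then (0:ℝ) else c x (n - 1) (k - 1)) * (U ℝ (k : ℤ)).eval x) n]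
    rw [Finset.sum_range_succ (fun k => c x (n - 1) k * (U ℝ ((k : ℤ) + 1)).eval x) n]
    rw [c_eq_zero x (by omega : n - 1 < n), zero_mul, add_zero]
    have h0 : (if (0:ℕ) = 0 then (0:ℝ) else c x (n - 1) (0 - 1)) * (U ℝ ((0:ℕ) : ℤ)).eval x = 0 := by
      simp
    rw [h0, add_zero]
    apply Finset.sum_congr rfl
    intro i _
    rw [if_neg (Nat.succ_ne_zero i), Nat.add_sub_cancel]
    push_cast
    ring
  have hC : ∑ k ∈ Finset.range (n + 1), c x (n - 1) (k + 1) * (U ℝ (k : ℤ)).eval x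
      = ∑ k ∈ Finset.range (n + 1),
          c x (n - 1) k * (if k = 0 then (0:ℝ) else (U ℝ ((k : ℤ) - 1)).eval x) := by
    set g : ℕ → ℝ := fun k =>
      c x (n - 1) k * (if k = 0 then (0:ℝ) else (U ℝ ((k : ℤ) - 1)).eval x) with hg
    have hgs : ∀ k : ℕ, c x (n - 1) (k + 1) * (U ℝ (k : ℤ)).eval x = g (k + 1) := by
      intro k
      rw [hg]
      simp only [if_neg (Nat.succ_ne_zero k)]
      have : ((k + 1 : ℕ) : ℤ) - 1 = (k : ℤ) := by push_cast; ring
      rw [this]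
    calc ∑ k ∈ Finset.range (n + 1), c x (n - 1) (k + 1) * (U ℝ (k : ℤ)).eval x
        = ∑ k ∈ Finset.range (n + 1), g (k + 1) := by
          exact Finset.sum_congr rfl fun k _ => hgs k
      _ = ∑ k ∈ Finset.range (n + 2), g k := by
          rw [Finset.sum_range_succ' g (n + 1)]
          have : g 0 = 0 := by rw [hg]; simp
          rw [this, add_zero]
      _ = ∑ k ∈ Finset.range (n + 1), g k := by
          rw [Finset.sum_range_succ g (n + 1)]
          have : g (n + 1) = 0 := by
            rw [hg]
            simp only
            rw [c_eq_zero x (by omega : n - 1 < n + 1), zero_mul]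
          rw [this, add_zero]
  rw [hA, hC, ← Finset.sum_sub_distrib, ← Finset.sum_add_distrib]
  apply Finset.sum_eq_zero
  intro k _
  rcases k with _ | j
  · have e1 : (U ℝ (((0:ℕ) : ℤ) + 1)).eval x = 2 * x := by norm_num [U_one]
    have e2 : (U ℝ ((0:ℕ) : ℤ)).eval x = 1 := by norm_num [U_zero]
    rw [e1, e2, if_pos rfl]
    ring
  · have hu : (U ℝ (((j + 1 : ℕ) : ℤ) + 1)).eval x
        = 2 * x * (U ℝ ((j + 1 : ℕ) : ℤ)).eval x - (U ℝ (((j + 1 : ℕ) : ℤ) - 1)).eval x := by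
      have h2 : (((j + 1 : ℕ) : ℤ) + 1) = (j : ℤ) + 2 := by push_cast; ring
      have h1 : ((j + 1 : ℕ) : ℤ) = (j : ℤ) + 1 := by push_cast; ring
      have h0 : (((j + 1 : ℕ) : ℤ) - 1) = (j : ℤ) := by push_cast; ring
      rw [h2, h0, h1, U_add_two]
      simp
    rw [if_neg (Nat.succ_ne_zero j), hu]
    ring

lemma Sb_zero (x : ℝ) : Sb x 0 = 1 := by
  rw [Sb]
  simp [c, f, gbinom_zero, U_zero]

lemma Sb_one (x : ℝ) : Sb x 1 = 0 := by
  rw [Sb]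
  rw [Finset.sum_range_succ, Finset.sum_range_succ, Finset.sum_range_zero]
  have h1 : c x 1 0 = -(2 * x) := by
    rw [c, Finset.sum_range_succ, Finset.sum_range_succ, Finset.sum_range_zero,
      f_eq_zero x (by omega : 1 < 0 + 2 * 1)]
    rw [f]
    norm_num [gbinom_zero]
  have h2 : c x 1 1 = 1 := by
    rw [c, Finset.sum_range_succ, Finset.sum_range_succ, Finset.sum_range_zero,
      f_eq_zero x (by omega : 1 < 1 + 2 * 1)]
    rw [f_top]
    norm_num
  rw [h1, h2]
  have e1 : (U ℝ ((1:ℕ) : ℤ)).eval x = 2 * x := by norm_num [U_one]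
  have e2 : (U ℝ ((0:ℕ) : ℤ)).eval x = 1 := by norm_num [U_zero]
  rw [e1, e2]
  ring

lemma Sb_eq (x : ℝ) : ∀ n : ℕ, Sb x n = Real.cos (Real.pi * n / 2) := by
  intro n
  induction n using Nat.strong_induction_on with
  | _ n ih =>
    match n, ih with
    | 0, _ => rw [Sb_zero]; norm_num
    | 1, _ => rw [Sb_one]; rw [Nat.cast_one, mul_one, Real.cos_pi_div_two]
    | (m + 2), ih =>
      have h := Sb_rec x (m + 2) (by omega)
      rw [show m + 2 - 2 = m from by omega] at h
      rw [h, ih m (by omega)]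
      have e : Real.pi * ((m + 2 : ℕ) : ℝ) / 2 = Real.pi * m / 2 + Real.pi := by
        push_cast; ring
      rw [e, Real.cos_add, Real.cos_pi, Real.sin_pi]
      ring

theorem chebyshev_U_reordered_identity (n : ℕ) (hn : 1 ≤ n) (x : ℝ) :
    ∑ k ∈ Finset.range (n + 1),
        (∑ i ∈ Finset.range ((n - k) / 2 + 1),
            (-1 : ℝ) ^ (n - k - 2 * i) * (((k : ℝ) + 1) / ((i : ℝ) + k + 1))
              * (Nat.choose (n - i) (k + i) : ℝ)
              * gbinom ((n : ℝ) - k - i - 1) i * (2 * x) ^ (n - k - 2 * i))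
          * (U ℝ k).eval x
    = Real.cos (Real.pi * n / 2) := by
  rw [← Sb_eq x n, Sb]
  apply Finset.sum_congr rfl
  intro k _
  congr 1
  exact inner_eq x n k
end
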